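/- Let (A,B,C,E) be the CCF of a minimal encoder G of an (n,k,δ) convolutional code C and (Â,B̂,Ĉ,Ê) the CCF of a minimal encoder Ĝ of the dual code Ĉ. Then the matrix P = Ĉ S_0^T − N A ∈ F^{δ×δ} is invertible, i.e. P ∈ GL_δ(F). -/

import Mathlib

open Polynomial Matrix
open scoped Classical

noncomputable section

namespace ConvCode

variable (F : Type) [Field F] [Fintype F]

/-- Hamming weight of a vector. -/
def wt {n : ℕ} (a : Fin n → F) : ℕ := (Finset.univ.filter fun j => a j ≠ 0).card

/-- Weight enumerator of a set of vectors in `F^n`, as a polynomial in `ℂ[W]`. -/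
def weSet {n : ℕ} (S : Set (Fin n → F)) : Polynomial ℂ :=
  ∑ a ∈ (Set.toFinite S).toFinset, (Polynomial.X : Polynomial ℂ) ^ wt F a

/-- The `i`-th row degree of a polynomial matrix. -/
def rowDeg {k n : ℕ} (G : Matrix (Fin k) (Fin n) (Polynomial F)) (i : Fin k) : ℕ :=
  Finset.univ.sup fun j => (G i j).natDegree

/-- `G` is basic: it has a polynomial right inverse. -/
def IsBasic {k n : ℕ} (G : Matrix (Fin k) (Fin n) (Polynomial F)) : Prop :=
  ∃ H : Matrix (Fin n) (Fin k) (Polynomial F), G * H = 1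

/-- The degree of the code: maximal degree of the `k × k` minors of `G`. -/
def codeDeg {k n : ℕ} (G : Matrix (Fin k) (Fin n) (Polynomial F)) : ℕ :=
  Finset.univ.sup fun f : Fin k ↪ Fin n => ((G.submatrix id f).det).natDegree

/-- A minimal (basic) encoder: the sum of the row degrees equals the degree of the code. -/
def IsMinimalEncoder {k n : ℕ} (G : Matrix (Fin k) (Fin n) (Polynomial F)) : Prop :=
  IsBasic F G ∧ ∑ i, rowDeg F G i = codeDeg F G

/-- The convolutional code generated by the encoder `G`. -/
def code {k n : ℕ} (G : Matrix (Fin k) (Fin n) (Polynomial F)) : Set (Fin n → Polynomial F) :=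
  Set.range fun u : Fin k → Polynomial F => u ᵥ* G

/-- The (module-theoretic) dual of a convolutional code. -/
def dualCode {n : ℕ} (𝓒 : Set (Fin n → Polynomial F)) : Set (Fin n → Polynomial F) :=
  {w | ∀ v ∈ 𝓒, w ⬝ᵥ v = 0}

/-- The sequence-space pairing `⟨⟨v,w⟩⟩ = ∑_t v_t w_tᵀ`. -/
def seqPair {n : ℕ} (v w : Fin n → Polynomial F) : F :=
  ∑ j, ∑ t ∈ Finset.range ((v j).natDegree + 1), (v j).coeff t * (w j).coeff t

/-- The sequence space dual of a convolutional code. -/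
def seqDual {n : ℕ} (𝓒 : Set (Fin n → Polynomial F)) : Set (Fin n → Polynomial F) :=
  {w | ∀ v ∈ 𝓒, ∀ l : ℕ, seqPair F v (fun j => Polynomial.X ^ l * w j) = 0}

/-- Index set of the state space of the controller canonical form:
a state index is a pair `(i, ν)` with `i` a row index and `ν < δ_i`. -/
abbrev StateIdx (k : ℕ) (d : Fin k → ℕ) : Type := (i : Fin k) × Fin (d i)

/-- The state-transition matrix `A` of the controller canonical form. -/
def ccfA {k : ℕ} (d : Fin k → ℕ) : Matrix (StateIdx k d) (StateIdx k d) F :=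
  Matrix.of fun s t => if s.1 = t.1 ∧ (s.2 : ℕ) + 1 = (t.2 : ℕ) then 1 else 0

/-- The input-to-state matrix `B` of the controller canonical form. -/
def ccfB {k : ℕ} (d : Fin k → ℕ) : Matrix (Fin k) (StateIdx k d) F :=
  Matrix.of fun i t => if t.1 = i ∧ (t.2 : ℕ) = 0 then 1 else 0

/-- The state-to-output matrix `C` of the controller canonical form. -/
def ccfC {k n : ℕ} (d : Fin k → ℕ) (G : Matrix (Fin k) (Fin n) (Polynomial F)) :
    Matrix (StateIdx k d) (Fin n) F :=
  Matrix.of fun s j => (G s.1 j).coeff ((s.2 : ℕ) + 1)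

/-- The matrix `E = G(0)` of the controller canonical form. -/
def ccfE {k n : ℕ} (G : Matrix (Fin k) (Fin n) (Polynomial F)) : Matrix (Fin k) (Fin n) F :=
  Matrix.of fun i j => (G i j).coeff 0

/-- The state index set of the controller canonical form of `G`. -/
abbrev States {k n : ℕ} (G : Matrix (Fin k) (Fin n) (Polynomial F)) : Type :=
  StateIdx k (rowDeg F G)

def matA {k n : ℕ} (G : Matrix (Fin k) (Fin n) (Polynomial F)) :
    Matrix (States F G) (States F G) F := ccfA F (rowDeg F G)

def matB {k n : ℕ} (G : Matrix (Fin k) (Fin n) (Polynomial F)) :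
    Matrix (Fin k) (States F G) F := ccfB F (rowDeg F G)

def matC {k n : ℕ} (G : Matrix (Fin k) (Fin n) (Polynomial F)) :
    Matrix (States F G) (Fin n) F := ccfC F (rowDeg F G) G

def matE {k n : ℕ} (G : Matrix (Fin k) (Fin n) (Polynomial F)) :
    Matrix (Fin k) (Fin n) F := ccfE F G

/-- The weight adjacency matrix of a state space realization `(A,B,C,E)`. -/
def WAM {σ : Type} [Fintype σ] {k n : ℕ} (A : Matrix σ σ F) (B : Matrix (Fin k) σ F)
    (C : Matrix σ (Fin n) F) (E : Matrix (Fin k) (Fin n) F) :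
    Matrix (σ → F) (σ → F) (Polynomial ℂ) :=
  Matrix.of fun X Y =>
    weSet F {v | ∃ u : Fin k → F, Y = X ᵥ* A + u ᵥ* B ∧ v = X ᵥ* C + u ᵥ* E}

/-- The weight adjacency matrix of an encoder `G` (via its controller canonical form). -/
def wam {k n : ℕ} (G : Matrix (Fin k) (Fin n) (Polynomial F)) :
    Matrix (States F G → F) (States F G → F) (Polynomial ℂ) :=
  WAM F (matA F G) (matB F G) (matC F G) (matE F G)

/-- The block code `C_const = 𝓒 ∩ F^n` of constant codewords. -/
def constSet {k n : ℕ} (G : Matrix (Fin k) (Fin n) (Polynomial F)) : Set (Fin n → F) :=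
  {w | (fun j => Polynomial.C (w j)) ∈ code F G}

/-- The block code `C_coeff` of coefficient vectors of codewords. -/
def coeffSet {k n : ℕ} (G : Matrix (Fin k) (Fin n) (Polynomial F)) : Set (Fin n → F) :=
  {w | ∃ v ∈ code F G, ∃ t : ℕ, ∀ j, (v j).coeff t = w j}

/-- The dual of a block code. -/
def blockDual {n : ℕ} (S : Set (Fin n → F)) : Set (Fin n → F) :=
  {w | ∀ v ∈ S, w ⬝ᵥ v = 0}

/-- `Δ`: the set of state pairs `(X,Y)` admitting a transition `Y = XA + uB`. -/
def Delta {k n : ℕ} (G : Matrix (Fin k) (Fin n) (Polynomial F)) :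
    Set ((States F G → F) × (States F G → F)) :=
  {p | ∃ u : Fin k → F, p.2 = p.1 ᵥ* matA F G + u ᵥ* matB F G}

/-- `Δ⁻ = {(0,Y) : Y ∈ im A}`. -/
def DeltaMinus {k n : ℕ} (G : Matrix (Fin k) (Fin n) (Polynomial F)) :
    Set ((States F G → F) × (States F G → F)) :=
  {p | p.1 = 0 ∧ ∃ X : States F G → F, p.2 = X ᵥ* matA F G}

/-- `Ω = {(X,Y) ∈ Δ : XC + Y Bᵀ E ∈ C_const}`. -/
def Omega {k n : ℕ} (G : Matrix (Fin k) (Fin n) (Polynomial F)) :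
    Set ((States F G → F) × (States F G → F)) :=
  {p | p ∈ Delta F G ∧
    p.1 ᵥ* matC F G + (p.2 ᵥ* (matB F G)ᵀ) ᵥ* matE F G ∈ constSet F G}

/-- Orthogonal of a set of state pairs with respect to the standard bilinear form on `F^{2δ}`. -/
def pairPerp {σ : Type} [Fintype σ] (S : Set ((σ → F) × (σ → F))) :
    Set ((σ → F) × (σ → F)) :=
  {p | ∀ s ∈ S, p.1 ⬝ᵥ s.1 + p.2 ⬝ᵥ s.2 = 0}

/-- `S_0 = Bᵀ E` and `S_i = Bᵀ B A^{i-1} C` for `i ≥ 1`. -/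
def Smat {k n : ℕ} (d : Fin k → ℕ) (G : Matrix (Fin k) (Fin n) (Polynomial F)) :
    ℕ → Matrix (StateIdx k d) (Fin n) F
  | 0 => (ccfB F d)ᵀ * ccfE F G
  | (i + 1) => (ccfB F d)ᵀ * ccfB F d * ccfA F d ^ i * ccfC F d G

def Sm {k n : ℕ} (G : Matrix (Fin k) (Fin n) (Polynomial F)) :
    ℕ → Matrix (States F G) (Fin n) F := Smat F (rowDeg F G) G

/-- The matrix `N = ∑_{m≥2} ∑_{i=1}^{m-1} ∑_{j=0}^{i-1} (Âᵀ)^{i-1} Ŝ_j S_{m-j}ᵀ A^{m-(i+1)}`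
(all summands with `m ≥ δ + δ̂` vanish, so the sum is truncated there). -/
def Nm {k kb n : ℕ} (G : Matrix (Fin k) (Fin n) (Polynomial F))
    (Gh : Matrix (Fin kb) (Fin n) (Polynomial F)) :
    Matrix (States F Gh) (States F G) F :=
  ∑ m ∈ Finset.Icc 2 (Fintype.card (States F G) + Fintype.card (States F Gh)),
    ∑ i ∈ Finset.Icc 1 (m - 1), ∑ j ∈ Finset.range i,
      (matA F Gh)ᵀ ^ (i - 1) * Sm F Gh j * (Sm F G (m - j))ᵀ * matA F G ^ (m - (i + 1))

/-- The reciprocal matrix `G' = diag(D^{δ_1},…,D^{δ_k}) · G(D⁻¹)`. -/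
def recip {k n : ℕ} (G : Matrix (Fin k) (Fin n) (Polynomial F)) :
    Matrix (Fin k) (Fin n) (Polynomial F) :=
  Matrix.of fun i j => (G i j).reflect (rowDeg F G i)

/-- The block diagonal matrix `R` whose blocks are the anti-identity matrices. -/
def Rmat {k : ℕ} (d : Fin k → ℕ) : Matrix (StateIdx k d) (StateIdx k d) F :=
  Matrix.of fun s t => if s.1 = t.1 ∧ (s.2 : ℕ) + (t.2 : ℕ) + 1 = d s.1 then 1 else 0

/-- The MacWilliams matrix `𝓗 = q^{-δ/2} (ζ^{τ(X Yᵀ)})_{X,Y}`. -/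
def macH (σ : Type) [Fintype σ] (p : ℕ) [Algebra (ZMod p) F] (ζ : ℂ) :
    Matrix (σ → F) (σ → F) ℂ :=
  Matrix.of fun X Y =>
    (((Real.sqrt (Fintype.card F) : ℝ) : ℂ))⁻¹ ^ Fintype.card σ *
      ζ ^ (Algebra.trace (ZMod p) F (X ⬝ᵥ Y)).val

/-- The MacWilliams transform `H(f)(W) = (1+(q-1)W)^n f((1-W)/(1+(q-1)W))`
on polynomials of degree at most `n`. -/
def macWT (q n : ℕ) (f : Polynomial ℂ) : Polynomial ℂ :=
  ∑ j ∈ Finset.range (n + 1),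
    Polynomial.C (f.coeff j) * (1 - Polynomial.X) ^ j *
      (1 + Polynomial.C ((q : ℂ) - 1) * Polynomial.X) ^ (n - j)

end ConvCode

namespace ConvCode

variable {F : Type} [Field F] [Fintype F]

lemma stateIdx_ext {k : ℕ} {d : Fin k → ℕ} {s t : StateIdx k d}
    (h1 : s.1 = t.1) (h2 : (s.2 : ℕ) = (t.2 : ℕ)) : s = t := by
  rcases s with ⟨i, v⟩
  rcases t with ⟨j, w⟩
  dsimp only at h1
  subst h1
  dsimp only at h2
  exact congrArg _ (Fin.ext h2)

lemma sum_if_single {α : Type} [Fintype α] (P : α → Prop) [DecidablePred P] (f : α → F) (a₀ : α)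
    (h₀ : ∀ a, P a → a = a₀) :
    (∑ a, if P a then f a else 0) = if P a₀ then f a₀ else 0 := by
  rcases Decidable.em (P a₀) with h | h
  · rw [if_pos h, Finset.sum_eq_single a₀]
    · rw [if_pos h]
    · intro b _ hb
      exact if_neg fun hPb => hb (h₀ b hPb)
    · intro hb; exact absurd (Finset.mem_univ a₀) hb
  · rw [if_neg h]
    refine Finset.sum_eq_zero fun b _ => if_neg fun hPb => h ?_
    rwa [h₀ b hPb] at hPb

lemma ccfA_pow_apply {k : ℕ} (d : Fin k → ℕ) (p : ℕ) (s t : StateIdx k d) :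
    (ccfA F d ^ p) s t = if s.1 = t.1 ∧ (s.2 : ℕ) + p = (t.2 : ℕ) then 1 else 0 := by
  induction p generalizing t with
  | zero =>
    rw [pow_zero]
    by_cases h : s = t
    · subst h; simp [Matrix.one_apply]
    · rw [Matrix.one_apply_ne h, if_neg]
      rintro ⟨h1, h2⟩
      exact h (stateIdx_ext h1 (by omega))
  | succ p ih =>
    rw [pow_succ, Matrix.mul_apply]
    have step : ∀ u : StateIdx k d, (ccfA F d ^ p) s u * ccfA F d u t
        = if (s.1 = u.1 ∧ (s.2:ℕ) + p = (u.2:ℕ)) ∧ (u.1 = t.1 ∧ (u.2:ℕ) + 1 = (t.2:ℕ))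
          then 1 else 0 := by
      intro u
      rw [ih]
      simp only [ccfA, Matrix.of_apply, ite_mul, one_mul, zero_mul, ← ite_and]
    rw [Finset.sum_congr rfl fun u _ => step u]
    by_cases h : s.1 = t.1 ∧ (s.2:ℕ) + (p+1) = (t.2:ℕ)
    · obtain ⟨h1, hsum⟩ := h
      have hlt : (s.2:ℕ) + p < d s.1 := by
        have ht : (t.2:ℕ) < d s.1 := by rw [h1]; exact t.2.isLt
        omega
      rw [Finset.sum_eq_single (⟨s.1, ⟨(s.2:ℕ)+p, hlt⟩⟩ : StateIdx k d)]
      · rw [if_pos, if_pos ⟨h1, hsum⟩]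
        exact ⟨⟨rfl, rfl⟩, ⟨h1, by simp only [Fin.val_mk]; omega⟩⟩
      · intro u _ hne
        rw [if_neg]
        rintro ⟨⟨a1, a2⟩, -⟩
        exact hne (stateIdx_ext a1.symm (by simp only [Fin.val_mk]; omega))
      · intro h'; exact absurd (Finset.mem_univ _) h'
    · rw [if_neg h]
      refine Finset.sum_eq_zero fun u _ => if_neg ?_
      rintro ⟨⟨a1, a2⟩, ⟨b1, b2⟩⟩
      exact h ⟨a1.trans b1, by omega⟩

lemma natDegree_le_rowDeg {k n : ℕ} (G : Matrix (Fin k) (Fin n) (Polynomial F)) (i : Fin k)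
    (c : Fin n) : (G i c).natDegree ≤ rowDeg F G i := by
  rw [rowDeg]; exact Finset.le_sup (f := fun j => (G i j).natDegree) (Finset.mem_univ c)

lemma coeff_eq_zero_of_rowDeg_lt {k n : ℕ} {G : Matrix (Fin k) (Fin n) (Polynomial F)} {i : Fin k}
    {c : Fin n} {m : ℕ} (h : rowDeg F G i < m) : (G i c).coeff m = 0 :=
  Polynomial.coeff_eq_zero_of_natDegree_lt (lt_of_le_of_lt (natDegree_le_rowDeg G i c) h)

lemma Sm_apply {k n : ℕ} (G : Matrix (Fin k) (Fin n) (Polynomial F)) (m : ℕ) (s : States F G)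
    (c : Fin n) : Sm F G m s c = if (s.2 : ℕ) = 0 then (G s.1 c).coeff m else 0 := by
  cases m with
  | zero =>
    rw [Sm, Smat, Matrix.mul_apply]
    have step : ∀ r : Fin k, (ccfB F (rowDeg F G))ᵀ s r * ccfE F G r c
        = if s.1 = r ∧ (s.2:ℕ) = 0 then (G r c).coeff 0 else 0 := by
      intro r
      simp only [Matrix.transpose_apply, ccfB, ccfE, Matrix.of_apply, ite_mul, one_mul, zero_mul]
    rw [Finset.sum_congr rfl fun r _ => step r,
      sum_if_single _ _ s.1 (fun r hr => hr.1.symm)]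
    refine if_congr ?_ rfl rfl
    constructor
    · exact fun h => h.2
    · exact fun h => ⟨rfl, h⟩
  | succ m =>
    rw [Sm, Smat, Matrix.mul_apply]
    have hBtB : ∀ u : StateIdx k (rowDeg F G),
        ((ccfB F (rowDeg F G))ᵀ * ccfB F (rowDeg F G)) s u
        = if (s.2:ℕ) = 0 ∧ u.1 = s.1 ∧ (u.2:ℕ) = 0 then 1 else 0 := by
      intro u
      rw [Matrix.mul_apply]
      have : ∀ r : Fin k, (ccfB F (rowDeg F G))ᵀ s r * ccfB F (rowDeg F G) r u
          = if (s.1 = r ∧ (s.2:ℕ) = 0) ∧ (u.1 = r ∧ (u.2:ℕ) = 0) then 1 else 0 := by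
        intro r
        simp only [Matrix.transpose_apply, ccfB, Matrix.of_apply, ite_mul, one_mul, zero_mul,
          ← ite_and]
      rw [Finset.sum_congr rfl fun r _ => this r,
        sum_if_single _ _ s.1 (fun r hr => hr.1.1.symm)]
      refine if_congr ?_ rfl rfl
      constructor
      · rintro ⟨⟨-, a⟩, b, c⟩; exact ⟨a, b, c⟩
      · rintro ⟨a, b, c⟩; exact ⟨⟨rfl, a⟩, b, c⟩
    have hBtBA : ∀ t : StateIdx k (rowDeg F G),
        ((ccfB F (rowDeg F G))ᵀ * ccfB F (rowDeg F G) * ccfA F (rowDeg F G) ^ m) s t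
        = if (s.2:ℕ) = 0 ∧ s.1 = t.1 ∧ (t.2:ℕ) = m then 1 else 0 := by
      intro t
      rw [Matrix.mul_apply]
      have : ∀ u : StateIdx k (rowDeg F G),
          ((ccfB F (rowDeg F G))ᵀ * ccfB F (rowDeg F G)) s u * (ccfA F (rowDeg F G) ^ m) u t
          = if (((s.2:ℕ) = 0 ∧ u.1 = s.1 ∧ (u.2:ℕ) = 0) ∧ (u.1 = t.1 ∧ (u.2:ℕ) + m = (t.2:ℕ)))
            then 1 else 0 := by
        intro u
        rw [hBtB u, ccfA_pow_apply]
        simp only [ite_mul, one_mul, zero_mul, ← ite_and]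
      rw [Finset.sum_congr rfl fun u _ => this u]
      have hpos : 0 < rowDeg F G s.1 := lt_of_le_of_lt (Nat.zero_le _) s.2.isLt
      rw [sum_if_single _ _ (⟨s.1, ⟨0, hpos⟩⟩ : StateIdx k (rowDeg F G))
        (fun u hu => stateIdx_ext hu.1.2.1 hu.1.2.2)]
      simp only [Fin.val_mk]
      refine if_congr ?_ rfl rfl
      constructor
      · rintro ⟨⟨a, -, -⟩, b, c⟩; exact ⟨a, b, by omega⟩
      · rintro ⟨a, b, c⟩; exact ⟨⟨a, by trivial, by trivial⟩, b, by omega⟩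
    rw [Finset.sum_congr rfl fun t _ => by rw [hBtBA t]]
    simp only [ite_mul, one_mul, zero_mul]
    by_cases hm : m < rowDeg F G s.1
    · rw [sum_if_single _ (fun t => ccfC F (rowDeg F G) G t c)
        (⟨s.1, ⟨m, hm⟩⟩ : StateIdx k (rowDeg F G))
        (fun t ht => (stateIdx_ext ht.2.1 (by simp only [Fin.val_mk]; omega)).symm)]
      have hC : ccfC F (rowDeg F G) G ⟨s.1, ⟨m, hm⟩⟩ c = (G s.1 c).coeff (m+1) := rfl
      rw [hC]
      refine if_congr ?_ rfl rfl
      constructor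
      · exact fun h => h.1
      · exact fun h => ⟨h, by trivial, by trivial⟩
    · have hz : ∀ t : StateIdx k (rowDeg F G),
          (if (s.2:ℕ) = 0 ∧ s.1 = t.1 ∧ (t.2:ℕ) = m then ccfC F (rowDeg F G) G t c else 0)
            = 0 := by
        intro t
        rw [if_neg]
        rintro ⟨-, h2, h3⟩
        have ht : (t.2:ℕ) < rowDeg F G s.1 := by rw [h2]; exact t.2.isLt
        omega
      rw [Finset.sum_eq_zero fun t _ => hz t]
      have hc : (G s.1 c).coeff (m+1) = 0 := coeff_eq_zero_of_rowDeg_lt (by omega)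
      rw [hc]
      simp

end ConvCode
namespace ConvCode

variable {F : Type} [Field F] [Fintype F]

/-- Coefficient pairing of row `ih` of `Gh` and row `i` of `G`. -/
def sprod {k kb n : ℕ} (G : Matrix (Fin k) (Fin n) (Polynomial F))
    (Gh : Matrix (Fin kb) (Fin n) (Polynomial F)) (ih : Fin kb) (i : Fin k) (x y : ℕ) : F :=
  ∑ c, (Gh ih c).coeff x * (G i c).coeff y

lemma card_states {k n : ℕ} (G : Matrix (Fin k) (Fin n) (Polynomial F)) :
    Fintype.card (States F G) = ∑ i, rowDeg F G i := by
  rw [Fintype.card_sigma]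
  simp

lemma state_snd_lt_card {k n : ℕ} (G : Matrix (Fin k) (Fin n) (Polynomial F)) (s : States F G) :
    (s.2 : ℕ) < Fintype.card (States F G) := by
  rw [card_states]
  exact lt_of_lt_of_le s.2.isLt
    (Finset.single_le_sum (fun i _ => Nat.zero_le _) (Finset.mem_univ s.1))

lemma sandwich_apply {k kb n : ℕ} (G : Matrix (Fin k) (Fin n) (Polynomial F))
    (Gh : Matrix (Fin kb) (Fin n) (Polynomial F)) (p r j l : ℕ)
    (sh : States F Gh) (s : States F G) :
    ((matA F Gh)ᵀ ^ p * Sm F Gh j * (Sm F G l)ᵀ * matA F G ^ r) sh s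
      = if p = (sh.2:ℕ) ∧ r = (s.2:ℕ) then sprod G Gh sh.1 s.1 j l else 0 := by
  rw [Matrix.mul_assoc ((matA F Gh)ᵀ ^ p) (Sm F Gh j) ((Sm F G l)ᵀ)]
  have hX : ∀ (th : States F Gh) (u : States F G),
      (Sm F Gh j * (Sm F G l)ᵀ) th u
        = if (th.2:ℕ) = 0 ∧ (u.2:ℕ) = 0 then sprod G Gh th.1 u.1 j l else 0 := by
    intro th u
    rw [Matrix.mul_apply]
    have : ∀ c, Sm F Gh j th c * (Sm F G l)ᵀ c u
        = if (th.2:ℕ) = 0 ∧ (u.2:ℕ) = 0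
          then (Gh th.1 c).coeff j * (G u.1 c).coeff l else 0 := by
      intro c
      rw [Matrix.transpose_apply, Sm_apply, Sm_apply]
      simp only [ite_mul, mul_ite, zero_mul, mul_zero, ← ite_and]
      refine if_congr ?_ rfl rfl
      tauto
    rw [Finset.sum_congr rfl fun c _ => this c]
    rcases Decidable.em ((th.2:ℕ) = 0 ∧ (u.2:ℕ) = 0) with h|h
    · simp only [if_pos h]; rfl
    · simp only [if_neg h, Finset.sum_const_zero]
  have hT1X : ∀ u : States F G,
      ((matA F Gh)ᵀ ^ p * (Sm F Gh j * (Sm F G l)ᵀ)) sh u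
        = if p = (sh.2:ℕ) ∧ (u.2:ℕ) = 0 then sprod G Gh sh.1 u.1 j l else 0 := by
    intro u
    rw [Matrix.mul_apply]
    have : ∀ th : States F Gh,
        ((matA F Gh)ᵀ ^ p) sh th * (Sm F Gh j * (Sm F G l)ᵀ) th u
          = if (th.1 = sh.1 ∧ (th.2:ℕ) + p = (sh.2:ℕ)) ∧ ((th.2:ℕ) = 0 ∧ (u.2:ℕ) = 0)
            then sprod G Gh th.1 u.1 j l else 0 := by
      intro th
      rw [← Matrix.transpose_pow, Matrix.transpose_apply, hX th u]
      have hA : (matA F Gh ^ p) th sh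
          = if th.1 = sh.1 ∧ (th.2:ℕ) + p = (sh.2:ℕ) then (1:F) else 0 := by
        rw [matA]; exact ccfA_pow_apply (rowDeg F Gh) p th sh
      rw [hA]
      simp only [ite_mul, mul_ite, zero_mul, mul_zero, one_mul, ← ite_and]
      exact if_congr (by tauto) rfl rfl
    rw [Finset.sum_congr rfl fun th _ => this th]
    have hpos : 0 < rowDeg F Gh sh.1 := lt_of_le_of_lt (Nat.zero_le _) sh.2.isLt
    rw [sum_if_single _ _ (⟨sh.1, ⟨0, hpos⟩⟩ : States F Gh)
      (fun th hth => stateIdx_ext hth.1.1 hth.2.1)]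
    simp only [Fin.val_mk]
    refine if_congr ?_ rfl rfl
    constructor
    · rintro ⟨⟨-, a⟩, -, b⟩; exact ⟨by omega, b⟩
    · rintro ⟨a, b⟩; exact ⟨⟨by trivial, by omega⟩, by trivial, b⟩
  rw [Matrix.mul_apply]
  have : ∀ u : States F G,
      ((matA F Gh)ᵀ ^ p * (Sm F Gh j * (Sm F G l)ᵀ)) sh u * (matA F G ^ r) u s
        = if (p = (sh.2:ℕ) ∧ (u.2:ℕ) = 0) ∧ (u.1 = s.1 ∧ (u.2:ℕ) + r = (s.2:ℕ))
          then sprod G Gh sh.1 u.1 j l else 0 := by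
    intro u
    rw [hT1X u]
    have hA : (matA F G ^ r) u s
        = if u.1 = s.1 ∧ (u.2:ℕ) + r = (s.2:ℕ) then (1:F) else 0 := by
      rw [matA]; exact ccfA_pow_apply (rowDeg F G) r u s
    rw [hA]
    simp only [ite_mul, mul_ite, zero_mul, mul_zero, mul_one, ← ite_and]
    exact if_congr (by tauto) rfl rfl
  rw [Finset.sum_congr rfl fun u _ => this u]
  have hpos : 0 < rowDeg F G s.1 := lt_of_le_of_lt (Nat.zero_le _) s.2.isLt
  rw [sum_if_single _ _ (⟨s.1, ⟨0, hpos⟩⟩ : States F G)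
    (fun u hu => stateIdx_ext hu.2.1 hu.1.2)]
  simp only [Fin.val_mk]
  refine if_congr ?_ rfl rfl
  constructor
  · rintro ⟨⟨a, -⟩, -, b⟩; exact ⟨a, by omega⟩
  · rintro ⟨a, b⟩; exact ⟨⟨a, by trivial⟩, by trivial, by omega⟩

lemma Nm_apply {k kb n : ℕ} (G : Matrix (Fin k) (Fin n) (Polynomial F))
    (Gh : Matrix (Fin kb) (Fin n) (Polynomial F)) (sh : States F Gh) (s : States F G) :
    Nm F G Gh sh s = ∑ j ∈ Finset.range ((sh.2:ℕ) + 1),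
      sprod G Gh sh.1 s.1 j ((sh.2:ℕ) + (s.2:ℕ) + 2 - j) := by
  rw [Nm]
  simp only [Matrix.sum_apply]
  have hterm : ∀ m i j, ((matA F Gh)ᵀ ^ (i-1) * Sm F Gh j * (Sm F G (m-j))ᵀ
        * matA F G ^ (m-(i+1))) sh s
      = if i - 1 = (sh.2:ℕ) ∧ m - (i+1) = (s.2:ℕ)
        then sprod G Gh sh.1 s.1 j (m-j) else 0 := fun m i j => sandwich_apply G Gh _ _ _ _ sh s
  rw [Finset.sum_congr rfl fun m _ => Finset.sum_congr rfl fun i _ =>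
    Finset.sum_congr rfl fun j _ => hterm m i j]
  rw [Finset.sum_eq_single ((sh.2:ℕ) + (s.2:ℕ) + 2)]
  · rw [Finset.sum_eq_single ((sh.2:ℕ) + 1)]
    · have hc : ((sh.2:ℕ) + 1) - 1 = (sh.2:ℕ)
          ∧ ((sh.2:ℕ) + (s.2:ℕ) + 2) - (((sh.2:ℕ) + 1) + 1) = (s.2:ℕ) := by omega
      simp only [if_pos hc]
    · intro i hi hne
      rw [Finset.mem_Icc] at hi
      refine Finset.sum_eq_zero fun j _ => if_neg ?_
      rintro ⟨a, b⟩; omega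
    · intro hnm
      exfalso
      refine hnm (Finset.mem_Icc.mpr ⟨by omega, by omega⟩)
  · intro m hm hne
    rw [Finset.mem_Icc] at hm
    refine Finset.sum_eq_zero fun i hi => ?_
    rw [Finset.mem_Icc] at hi
    refine Finset.sum_eq_zero fun j _ => if_neg ?_
    rintro ⟨a, b⟩; omega
  · intro hnm
    exfalso
    refine hnm (Finset.mem_Icc.mpr ⟨by omega, ?_⟩)
    have h1 := state_snd_lt_card G s
    have h2 := state_snd_lt_card Gh sh
    omega

lemma P_apply {k kb n : ℕ} (G : Matrix (Fin k) (Fin n) (Polynomial F))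
    (Gh : Matrix (Fin kb) (Fin n) (Polynomial F)) (sh : States F Gh) (s : States F G) :
    (matC F Gh * (Sm F G 0)ᵀ - Nm F G Gh * matA F G) sh s =
      if (s.2:ℕ) = 0 then sprod G Gh sh.1 s.1 ((sh.2:ℕ)+1) 0
      else - ∑ j ∈ Finset.range ((sh.2:ℕ)+1),
        sprod G Gh sh.1 s.1 j ((sh.2:ℕ)+(s.2:ℕ)+1-j) := by
  rw [Matrix.sub_apply]
  have h1 : (matC F Gh * (Sm F G 0)ᵀ) sh s
      = if (s.2:ℕ) = 0 then sprod G Gh sh.1 s.1 ((sh.2:ℕ)+1) 0 else 0 := by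
    rw [Matrix.mul_apply]
    have : ∀ c, matC F Gh sh c * (Sm F G 0)ᵀ c s
        = if (s.2:ℕ) = 0
          then (Gh sh.1 c).coeff ((sh.2:ℕ)+1) * (G s.1 c).coeff 0 else 0 := by
      intro c
      rw [Matrix.transpose_apply, Sm_apply]
      have hC : matC F Gh sh c = (Gh sh.1 c).coeff ((sh.2:ℕ)+1) := rfl
      rw [hC, mul_ite, mul_zero]
    rw [Finset.sum_congr rfl fun c _ => this c]
    rcases Decidable.em ((s.2:ℕ) = 0) with h|h
    · simp only [if_pos h]; rfl
    · simp only [if_neg h, Finset.sum_const_zero]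
  have h2 : (Nm F G Gh * matA F G) sh s
      = if (s.2:ℕ) = 0 then 0
        else ∑ j ∈ Finset.range ((sh.2:ℕ)+1),
          sprod G Gh sh.1 s.1 j ((sh.2:ℕ)+(s.2:ℕ)+1-j) := by
    rw [Matrix.mul_apply]
    have hstep : ∀ u : States F G, Nm F G Gh sh u * matA F G u s
        = if u.1 = s.1 ∧ (u.2:ℕ)+1 = (s.2:ℕ) then Nm F G Gh sh u else 0 := by
      intro u
      have hA : matA F G u s
          = if u.1 = s.1 ∧ (u.2:ℕ)+1 = (s.2:ℕ) then (1:F) else 0 := rfl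
      rw [hA, mul_ite, mul_one, mul_zero]
    rw [Finset.sum_congr rfl fun u _ => hstep u]
    rcases Nat.eq_zero_or_pos (s.2:ℕ) with h|h
    · rw [if_pos h, Finset.sum_eq_zero]
      intro u _
      rw [if_neg]
      rintro ⟨-, h2⟩; omega
    · have hlt : (s.2:ℕ) - 1 < rowDeg F G s.1 := by have := s.2.isLt; omega
      rw [if_neg (by omega), sum_if_single _ (fun u => Nm F G Gh sh u)
        (⟨s.1, ⟨(s.2:ℕ)-1, hlt⟩⟩ : States F G)
        (fun u hu => stateIdx_ext hu.1 (by simp only [Fin.val_mk]; omega)),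
        if_pos ⟨rfl, by simp only [Fin.val_mk]; omega⟩, Nm_apply]
      refine Finset.sum_congr rfl fun j hj => ?_
      rw [Finset.mem_range] at hj
      simp only [Fin.val_mk]
      congr 1
      omega
  rw [h1, h2]
  rcases Decidable.em ((s.2:ℕ) = 0) with h|h
  · rw [if_pos h, if_pos h, if_pos h, sub_zero]
  · rw [if_neg h, if_neg h, if_neg h, zero_sub]

end ConvCode
namespace ConvCode

variable {F : Type} [Field F] [Fintype F]

/-- The `K`-matrix: `K[ŝ,s] = ∑_{t ≤ ν} ⟨ĝ_{î,ν̂+1+t}, g_{i,ν−t}⟩`. -/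
def Kmat {k kb n : ℕ} (G : Matrix (Fin k) (Fin n) (Polynomial F))
    (Gh : Matrix (Fin kb) (Fin n) (Polynomial F)) :
    Matrix (States F Gh) (States F G) F :=
  Matrix.of fun sh s => ∑ t ∈ Finset.range ((s.2:ℕ)+1),
    sprod G Gh sh.1 s.1 ((sh.2:ℕ)+1+t) ((s.2:ℕ)-t)

lemma sprod_swap {k kb n : ℕ} (G : Matrix (Fin k) (Fin n) (Polynomial F))
    (Gh : Matrix (Fin kb) (Fin n) (Polynomial F)) (ih : Fin kb) (i : Fin k) (x y : ℕ) :
    sprod Gh G i ih x y = sprod G Gh ih i y x := by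
  unfold sprod
  exact Finset.sum_congr rfl fun c _ => mul_comm _ _

lemma sprod_antidiag_eq_zero {k kb n : ℕ} {G : Matrix (Fin k) (Fin n) (Polynomial F)}
    {Gh : Matrix (Fin kb) (Fin n) (Polynomial F)}
    (horth : ∀ (ih : Fin kb) (i : Fin k), ∑ c, Gh ih c * G i c = 0)
    (ih : Fin kb) (i : Fin k) (M : ℕ) :
    ∑ j ∈ Finset.range (M+1), sprod G Gh ih i j (M - j) = 0 := by
  have h0 : ((∑ c, Gh ih c * G i c : Polynomial F)).coeff M = 0 := by rw [horth]; simp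
  rw [Polynomial.finset_sum_coeff] at h0
  rw [Finset.sum_congr rfl (fun c _ => by
    rw [Polynomial.coeff_mul, Finset.Nat.sum_antidiagonal_eq_sum_range_succ_mk])] at h0
  rw [Finset.sum_comm] at h0
  unfold sprod
  exact h0

lemma sprod_flip {k kb n : ℕ} {G : Matrix (Fin k) (Fin n) (Polynomial F)}
    {Gh : Matrix (Fin kb) (Fin n) (Polynomial F)}
    (horth : ∀ (ih : Fin kb) (i : Fin k), ∑ c, Gh ih c * G i c = 0)
    (ih : Fin kb) (i : Fin k) (a b : ℕ) :
    ∑ t ∈ Finset.range (b+1), sprod G Gh ih i (a+1+t) (b-t)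
      = - ∑ j ∈ Finset.range (a+1), sprod G Gh ih i j (a+b+1-j) := by
  have h := sprod_antidiag_eq_zero horth ih i (a+b+1)
  rw [show a+b+1+1 = (a+1)+(b+1) by ring, Finset.sum_range_add] at h
  have hc : ∀ t ∈ Finset.range (b+1),
      sprod G Gh ih i (a+1+t) (a+b+1-(a+1+t)) = sprod G Gh ih i (a+1+t) (b-t) := by
    intro t ht
    rw [Finset.mem_range] at ht
    have : a+b+1-(a+1+t) = b - t := by omega
    rw [this]
  rw [Finset.sum_congr rfl hc] at h
  exact eq_neg_of_add_eq_zero_left (by rwa [add_comm] at h)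

lemma P_eq_K {k kb n : ℕ} {G : Matrix (Fin k) (Fin n) (Polynomial F)}
    {Gh : Matrix (Fin kb) (Fin n) (Polynomial F)}
    (horth : ∀ (ih : Fin kb) (i : Fin k), ∑ c, Gh ih c * G i c = 0) :
    matC F Gh * (Sm F G 0)ᵀ - Nm F G Gh * matA F G = Kmat G Gh := by
  ext sh s
  rw [P_apply, Kmat, Matrix.of_apply]
  rcases Decidable.em ((s.2:ℕ) = 0) with h|h
  · rw [if_pos h, h, Finset.sum_range_one]
  · rw [if_neg h, sprod_flip horth]

lemma P_eq_negKt {k kb n : ℕ} {G : Matrix (Fin k) (Fin n) (Polynomial F)}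
    {Gh : Matrix (Fin kb) (Fin n) (Polynomial F)}
    (horth : ∀ (ih : Fin kb) (i : Fin k), ∑ c, Gh ih c * G i c = 0)
    (sh : States F Gh) (s : States F G) :
    (matC F Gh * (Sm F G 0)ᵀ - Nm F G Gh * matA F G) sh s = - Kmat Gh G s sh := by
  have hKt : Kmat Gh G s sh = ∑ t ∈ Finset.range ((sh.2:ℕ)+1),
      sprod G Gh sh.1 s.1 ((sh.2:ℕ)-t) ((s.2:ℕ)+1+t) := by
    rw [Kmat, Matrix.of_apply]
    exact Finset.sum_congr rfl fun t _ => sprod_swap G Gh sh.1 s.1 _ _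
  have hrefl : ∀ b : ℕ, ∑ j ∈ Finset.range ((sh.2:ℕ)+1), sprod G Gh sh.1 s.1 j (b+1-j)
      = ∑ t ∈ Finset.range ((sh.2:ℕ)+1),
        sprod G Gh sh.1 s.1 ((sh.2:ℕ)-t) (b+1-((sh.2:ℕ)-t)) := by
    intro b
    rw [← Finset.sum_range_reflect (fun j => sprod G Gh sh.1 s.1 j (b+1-j)) ((sh.2:ℕ)+1)]
    refine Finset.sum_congr rfl fun t ht => ?_
    rw [Finset.mem_range] at ht
    have : (sh.2:ℕ)+1-1-t = (sh.2:ℕ)-t := by omega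
    rw [this]
  rw [P_apply, hKt]
  rcases Decidable.em ((s.2:ℕ) = 0) with h|h
  · rw [if_pos h, h]
    have hanti := sprod_antidiag_eq_zero horth sh.1 s.1 ((sh.2:ℕ)+1)
    rw [Finset.sum_range_succ] at hanti
    have h2 := hrefl (sh.2:ℕ)
    have hc : ∀ t ∈ Finset.range ((sh.2:ℕ)+1),
        sprod G Gh sh.1 s.1 ((sh.2:ℕ)-t) ((sh.2:ℕ)+1-((sh.2:ℕ)-t))
          = sprod G Gh sh.1 s.1 ((sh.2:ℕ)-t) (0+1+t) := by
      intro t ht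
      rw [Finset.mem_range] at ht
      have : (sh.2:ℕ)+1-((sh.2:ℕ)-t) = 0+1+t := by omega
      rw [this]
    rw [Finset.sum_congr rfl hc] at h2
    have hz : (sh.2:ℕ)+1-((sh.2:ℕ)+1) = 0 := by omega
    rw [hz] at hanti
    rw [← h2]
    exact eq_neg_of_add_eq_zero_left (by rwa [add_comm] at hanti)
  · rw [if_neg h]
    have h2 := hrefl ((sh.2:ℕ)+(s.2:ℕ))
    have hc : ∀ t ∈ Finset.range ((sh.2:ℕ)+1),
        sprod G Gh sh.1 s.1 ((sh.2:ℕ)-t) ((sh.2:ℕ)+(s.2:ℕ)+1-((sh.2:ℕ)-t))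
          = sprod G Gh sh.1 s.1 ((sh.2:ℕ)-t) ((s.2:ℕ)+1+t) := by
      intro t ht
      rw [Finset.mem_range] at ht
      have : (sh.2:ℕ)+(s.2:ℕ)+1-((sh.2:ℕ)-t) = (s.2:ℕ)+1+t := by omega
      rw [this]
    rw [Finset.sum_congr rfl hc] at h2
    rw [← h2]
end ConvCode
namespace ConvCode

variable {F : Type} [Field F] [Fintype F]

lemma coeff_mul_of_natDegree_le' {p q : Polynomial F} {a b : ℕ}
    (hp : p.natDegree ≤ a) (hq : q.natDegree ≤ b) :
    (p * q).coeff (a + b) = p.coeff a * q.coeff b := by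
  rw [Polynomial.coeff_mul, Finset.sum_eq_single (a, b)]
  · intro x hx hne
    rw [Finset.HasAntidiagonal.mem_antidiagonal] at hx
    rcases Decidable.em (x.1 = a) with h1|h1
    · have h2 : x.2 = b := by omega
      exact absurd (Prod.ext h1 h2) hne
    · rcases Nat.lt_or_ge a x.1 with h|h
      · rw [Polynomial.coeff_eq_zero_of_natDegree_lt (lt_of_le_of_lt hp h), zero_mul]
      · have hb : b < x.2 := by omega
        rw [Polynomial.coeff_eq_zero_of_natDegree_lt (lt_of_le_of_lt hq hb), mul_zero]
  · intro h; exact absurd (Finset.HasAntidiagonal.mem_antidiagonal.mpr (by simp)) h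

lemma coeff_prod_of_natDegree_le'' {ι : Type} (s : Finset ι) (f : ι → Polynomial F) (d : ι → ℕ)
    (h : ∀ i ∈ s, (f i).natDegree ≤ d i) :
    (∏ i ∈ s, f i).coeff (∑ i ∈ s, d i) = ∏ i ∈ s, (f i).coeff (d i) := by
  induction s using Finset.cons_induction with
  | empty => simp
  | cons a s ha ih =>
    rw [Finset.prod_cons, Finset.sum_cons, Finset.prod_cons,
      ← ih (fun i hi => h i (Finset.mem_cons_of_mem hi))]
    refine coeff_mul_of_natDegree_le' (h a (Finset.mem_cons_self a s)) ?_
    exact le_trans (Polynomial.natDegree_prod_le s f)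
      (Finset.sum_le_sum fun i hi => h i (Finset.mem_cons_of_mem hi))

lemma coeff_det {ι : Type} [Fintype ι] [DecidableEq ι] (Q : Matrix ι ι (Polynomial F))
    (d : ι → ℕ) (h : ∀ i j, (Q i j).natDegree ≤ d i) :
    Q.det.coeff (∑ i, d i) = (Matrix.of fun i j => (Q i j).coeff (d i)).det := by
  rw [Matrix.det_apply, Matrix.det_apply, Polynomial.finset_sum_coeff]
  refine Finset.sum_congr rfl fun σ _ => ?_
  rw [Polynomial.coeff_smul]
  have hsum : ∑ i, d i = ∑ i, d (σ i) := (Equiv.sum_comp σ d).symm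
  rw [hsum, coeff_prod_of_natDegree_le'' _ _ _ (fun i _ => h (σ i) i)]
  rfl

lemma leading_rows_indep {kb n : ℕ} {Gh : Matrix (Fin kb) (Fin n) (Polynomial F)}
    (hGh : IsMinimalEncoder F Gh) (lam : Fin kb → F)
    (hlam : lam ᵥ* (Matrix.of fun ih c => (Gh ih c).coeff (rowDeg F Gh ih)) = 0) :
    lam = 0 := by
  rcases Nat.eq_zero_or_pos (∑ i, rowDeg F Gh i) with hz|hpos
  · obtain ⟨Hh, hHh⟩ := hGh.1
    have hd0 : ∀ ih, rowDeg F Gh ih = 0 := fun ih =>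
      Finset.sum_eq_zero_iff.mp hz ih (Finset.mem_univ ih)
    have hmap : (Gh.map (Polynomial.constantCoeff (R := F)))
        * (Hh.map (Polynomial.constantCoeff (R := F))) = 1 := by
      rw [← Matrix.map_mul, hHh]
      exact Matrix.map_one _ (map_zero _) (map_one _)
    have hGm : Gh.map (Polynomial.constantCoeff (R := F))
        = Matrix.of fun ih c => (Gh ih c).coeff (rowDeg F Gh ih) := by
      ext ih c
      simp [Matrix.map_apply, Polynomial.constantCoeff_apply, hd0 ih]
    calc lam = lam ᵥ* 1 := (Matrix.vecMul_one lam).symm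
    _ = (lam ᵥ* Gh.map (Polynomial.constantCoeff (R := F)))
          ᵥ* Hh.map (Polynomial.constantCoeff (R := F)) := by
        rw [Matrix.vecMul_vecMul, hmap]
    _ = 0 := by rw [hGm, hlam, Matrix.zero_vecMul]
  · by_contra hlam0
    have hcd : ∑ i, rowDeg F Gh i
        = Finset.univ.sup fun f : Fin kb ↪ Fin n => ((Gh.submatrix id f).det).natDegree := by
      rw [hGh.2, codeDeg]
    have hne : (Finset.univ : Finset (Fin kb ↪ Fin n)).Nonempty := by
      by_contra hemp
      rw [Finset.not_nonempty_iff_eq_empty] at hemp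
      rw [hemp, Finset.sup_empty] at hcd
      simp only [Nat.bot_eq_zero] at hcd
      omega
    obtain ⟨f₀, -, hf₀⟩ := Finset.exists_mem_eq_sup Finset.univ hne
      (fun f : Fin kb ↪ Fin n => ((Gh.submatrix id f).det).natDegree)
    have hDg : ((Gh.submatrix id f₀).det).natDegree = ∑ i, rowDeg F Gh i := by
      rw [hcd, hf₀]
    have hdet0 : (Gh.submatrix id f₀).det ≠ 0 := by
      intro h0; rw [h0, Polynomial.natDegree_zero] at hDg; omega
    have hlead : ((Gh.submatrix id f₀).det).coeff (∑ i, rowDeg F Gh i) ≠ 0 := by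
      rw [← hDg, Polynomial.coeff_natDegree]
      exact Polynomial.leadingCoeff_ne_zero.mpr hdet0
    apply hlead
    rw [coeff_det (Gh.submatrix id f₀) (fun ih => rowDeg F Gh ih)
      (fun i j => natDegree_le_rowDeg Gh i (f₀ j))]
    refine (Matrix.exists_vecMul_eq_zero_iff).mp ⟨lam, hlam0, ?_⟩
    funext c
    have h1 := congrFun hlam (f₀ c)
    simp only [Matrix.vecMul, dotProduct, Matrix.of_apply, Pi.zero_apply,
      Matrix.submatrix_apply, id_eq] at h1 ⊢
    exact h1

end ConvCode
namespace ConvCode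

variable {F : Type} [Field F] [Fintype F]

lemma main_inj {k kb n : ℕ}
    (G : Matrix (Fin k) (Fin n) (Polynomial F)) (Gh : Matrix (Fin kb) (Fin n) (Polynomial F))
    (hGh : IsMinimalEncoder F Gh)
    (horth : ∀ (ih : Fin kb) (i : Fin k), ∑ c, Gh ih c * G i c = 0)
    (hmem : ∀ w : Fin n → Polynomial F, (∀ i, ∑ c, w c * G i c = 0) → w ∈ code F Gh)
    (x : States F Gh → F) (hx : x ᵥ* Kmat G Gh = 0) : x = 0 := by
  classical
  rcases Nat.eq_zero_or_pos (∑ i, rowDeg F Gh i) with hL0|hL1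
  · funext sh
    have h0 : rowDeg F Gh sh.1 = 0 :=
      Finset.sum_eq_zero_iff.mp hL0 sh.1 (Finset.mem_univ sh.1)
    exact absurd sh.2.isLt (by omega)
  set L := ∑ i, rowDeg F Gh i with hLdef
  have hdL : ∀ ih, rowDeg F Gh ih ≤ L :=
    fun ih => Finset.single_le_sum (fun i _ => Nat.zero_le _) (Finset.mem_univ ih)
  -- the tail polynomial vector
  set w : Fin n → Polynomial F := fun c => ∑ sh : States F Gh,
    Polynomial.C (x sh) * ∑ t ∈ Finset.range ((Gh sh.1 c).natDegree + 1),
      Polynomial.C ((Gh sh.1 c).coeff ((sh.2:ℕ)+1+t)) * Polynomial.X ^ t with hwdef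
  have hwcoeff : ∀ c t, (w c).coeff t
      = ∑ sh : States F Gh, x sh * (Gh sh.1 c).coeff ((sh.2:ℕ)+1+t) := by
    intro c t
    rw [hwdef, Polynomial.finset_sum_coeff]
    refine Finset.sum_congr rfl fun sh _ => ?_
    rw [Polynomial.coeff_C_mul]
    congr 1
    rw [Polynomial.finset_sum_coeff]
    have hterm : ∀ u ∈ Finset.range ((Gh sh.1 c).natDegree + 1),
        (Polynomial.C ((Gh sh.1 c).coeff ((sh.2:ℕ)+1+u)) * Polynomial.X ^ u).coeff t
          = if u = t then (Gh sh.1 c).coeff ((sh.2:ℕ)+1+u) else 0 := by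
      intro u _
      rw [Polynomial.coeff_C_mul, Polynomial.coeff_X_pow, mul_ite, mul_one, mul_zero]
      exact if_congr eq_comm rfl rfl
    rw [Finset.sum_congr rfl hterm, Finset.sum_ite_eq' (Finset.range _) t]
    rcases Decidable.em (t ∈ Finset.range ((Gh sh.1 c).natDegree + 1)) with h|h
    · rw [if_pos h]
    · rw [if_neg h]
      rw [Finset.mem_range, not_lt] at h
      exact (Polynomial.coeff_eq_zero_of_natDegree_lt (by omega)).symm
  -- w is orthogonal to all rows of G
  have hKx : ∀ s : States F G, ∑ sh : States F Gh, x sh * Kmat G Gh sh s = 0 := by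
    intro s
    have h1 := congrFun hx s
    simpa [Matrix.vecMul, dotProduct] using h1
  have hwG : ∀ i, ∑ c, w c * G i c = 0 := by
    intro i
    refine Polynomial.ext fun ν => ?_
    rw [Polynomial.finset_sum_coeff, Polynomial.coeff_zero]
    have hc : ∀ c, ((w c) * G i c).coeff ν
        = ∑ sh : States F Gh, ∑ t ∈ Finset.range (ν+1),
            x sh * ((Gh sh.1 c).coeff ((sh.2:ℕ)+1+t) * (G i c).coeff (ν-t)) := by
      intro c
      rw [Polynomial.coeff_mul, Finset.Nat.sum_antidiagonal_eq_sum_range_succ_mk]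
      have hstep : ∀ t ∈ Finset.range (ν+1),
          (w c).coeff ((t, ν-t).1) * (G i c).coeff ((t, ν-t).2)
            = ∑ sh : States F Gh,
                x sh * ((Gh sh.1 c).coeff ((sh.2:ℕ)+1+t) * (G i c).coeff (ν-t)) := by
        intro t _
        dsimp only
        rw [hwcoeff c t, Finset.sum_mul]
        exact Finset.sum_congr rfl fun sh _ => by ring
      rw [Finset.sum_congr rfl hstep]
      exact Finset.sum_comm
    rw [Finset.sum_congr rfl fun c _ => hc c, Finset.sum_comm]
    have hsh : ∀ sh : States F Gh,
        ∑ c, ∑ t ∈ Finset.range (ν+1),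
            x sh * ((Gh sh.1 c).coeff ((sh.2:ℕ)+1+t) * (G i c).coeff (ν-t))
          = x sh * ∑ t ∈ Finset.range (ν+1), sprod G Gh sh.1 i ((sh.2:ℕ)+1+t) (ν-t) := by
      intro sh
      rw [Finset.sum_comm, Finset.mul_sum]
      refine Finset.sum_congr rfl fun t _ => ?_
      rw [sprod, Finset.mul_sum]
    rw [Finset.sum_congr rfl fun sh _ => hsh sh]
    rcases Nat.lt_or_ge ν (rowDeg F G i) with hlt|hge
    · have := hKx ⟨i, ⟨ν, hlt⟩⟩
      rw [← this]
      refine Finset.sum_congr rfl fun sh _ => ?_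
      rw [Kmat, Matrix.of_apply]
    · refine Finset.sum_eq_zero fun sh _ => ?_
      have hflip := sprod_flip horth sh.1 i (sh.2:ℕ) ν
      have hzero : ∑ j ∈ Finset.range ((sh.2:ℕ)+1),
          sprod G Gh sh.1 i j ((sh.2:ℕ)+ν+1-j) = 0 := by
        refine Finset.sum_eq_zero fun j hj => ?_
        rw [Finset.mem_range] at hj
        rw [sprod]
        refine Finset.sum_eq_zero fun c _ => ?_
        have hz : (G i c).coeff ((sh.2:ℕ)+ν+1-j) = 0 :=
          coeff_eq_zero_of_rowDeg_lt (by omega)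
        rw [hz, mul_zero]
      rw [hflip, hzero, neg_zero, mul_zero]
  obtain ⟨u, hu⟩ := hmem w hwG
  have hwu : ∀ c, w c = ∑ ih, u ih * Gh ih c := by
    intro c
    rw [← hu]
    simp [Matrix.vecMul, dotProduct]
  -- the auxiliary polynomials
  set cpoly : Fin kb → Polynomial F := fun ih =>
    ∑ v : Fin (rowDeg F Gh ih), Polynomial.C (x ⟨ih, v⟩) * Polynomial.X ^ (L - 1 - (v:ℕ))
    with hcpolydef
  have hccoeff : ∀ (ih : Fin kb) (v : Fin (rowDeg F Gh ih)),
      (cpoly ih).coeff (L-1-(v:ℕ)) = x ⟨ih, v⟩ := by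
    intro ih v
    rw [hcpolydef]
    dsimp only
    rw [Polynomial.finset_sum_coeff]
    have hterm : ∀ v' : Fin (rowDeg F Gh ih),
        (Polynomial.C (x ⟨ih, v'⟩) * Polynomial.X ^ (L - 1 - (v':ℕ))).coeff (L-1-(v:ℕ))
          = if v' = v then x ⟨ih, v'⟩ else 0 := by
      intro v'
      rw [Polynomial.coeff_C_mul, Polynomial.coeff_X_pow, mul_ite, mul_one, mul_zero]
      refine if_congr ?_ rfl rfl
      have h1 := v.isLt
      have h2 := v'.isLt
      have h3 := hdL ih
      constructor
      · intro h; exact Fin.ext (by omega)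
      · intro h; rw [h]
    rw [Finset.sum_congr rfl fun v' _ => hterm v',
      Finset.sum_ite_eq' Finset.univ v (fun v' => x ⟨ih, v'⟩), if_pos (Finset.mem_univ v)]
  have hcdeg : ∀ ih, (cpoly ih).natDegree ≤ L - 1 := by
    intro ih
    rw [hcpolydef]
    dsimp only
    refine Polynomial.natDegree_sum_le_of_forall_le _ _ fun v _ => ?_
    refine le_trans (Polynomial.natDegree_C_mul_le _ _) ?_
    rw [Polynomial.natDegree_X_pow]
    omega
  set b : Fin kb → Polynomial F := fun ih => cpoly ih - Polynomial.X ^ L * u ih with hbdef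
  -- coefficients of b ᵥ* Gh vanish in degrees ≥ L
  have hbG : ∀ (col : Fin n) (m : ℕ), L ≤ m → (∑ ih, b ih * Gh ih col).coeff m = 0 := by
    intro col m hm
    obtain ⟨t, rfl⟩ : ∃ t, m = L + t := ⟨m - L, by omega⟩
    have hsplit : ∑ ih, b ih * Gh ih col
        = (∑ ih, cpoly ih * Gh ih col) - ∑ ih, Polynomial.X ^ L * (u ih * Gh ih col) := by
      rw [← Finset.sum_sub_distrib]
      refine Finset.sum_congr rfl fun ih _ => ?_
      rw [hbdef]
      dsimp only
      rw [sub_mul, mul_assoc]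
    rw [hsplit, Polynomial.coeff_sub]
    have h1 : (∑ ih, cpoly ih * Gh ih col).coeff (L+t) = (w col).coeff t := by
      rw [Polynomial.finset_sum_coeff, hwcoeff, ← Finset.univ_sigma_univ, Finset.sum_sigma]
      refine Finset.sum_congr rfl fun ih _ => ?_
      rw [hcpolydef]
      dsimp only
      rw [Finset.sum_mul, Polynomial.finset_sum_coeff]
      refine Finset.sum_congr rfl fun v _ => ?_
      rw [mul_assoc, Polynomial.coeff_C_mul,
        mul_comm (Polynomial.X ^ (L-1-(v:ℕ))) (Gh ih col),
        Polynomial.coeff_mul_X_pow', if_pos (by omega)]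
      congr 2
      have h1 := v.isLt
      have h3 := hdL ih
      omega
    have h2 : (∑ ih, Polynomial.X ^ L * (u ih * Gh ih col)).coeff (L+t)
        = (w col).coeff t := by
      rw [Polynomial.finset_sum_coeff]
      have hstep : ∀ ih, (Polynomial.X ^ L * (u ih * Gh ih col)).coeff (L+t)
          = (u ih * Gh ih col).coeff t := by
        intro ih
        rw [mul_comm, Polynomial.coeff_mul_X_pow', if_pos (by omega)]
        congr 1
        omega
      rw [Finset.sum_congr rfl fun ih _ => hstep ih, hwu col, Polynomial.finset_sum_coeff]
    rw [h1, h2, sub_self]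
  -- b vanishes identically
  have hb0 : ∀ ih, b ih = 0 := by
    by_contra hbne
    push_neg at hbne
    obtain ⟨ih₁, hih₁⟩ := hbne
    set T : Finset (Fin kb) := Finset.univ.filter (fun ih => b ih ≠ 0) with hT
    have hTne : T.Nonempty := ⟨ih₁, by simp [hT, hih₁]⟩
    set th := T.sup (fun ih => (b ih).natDegree + rowDeg F Gh ih) with hth
    obtain ⟨ih₀, hih₀T, hih₀⟩ := Finset.exists_mem_eq_sup T hTne
      (fun ih => (b ih).natDegree + rowDeg F Gh ih)
    rw [← hth] at hih₀
    have hbL : ∀ ih, b ih ≠ 0 → L ≤ (b ih).natDegree + rowDeg F Gh ih := by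
      intro ih hbih
      rcases Decidable.em (u ih = 0) with hu0|hu0
      · have hbc : b ih = cpoly ih := by
          rw [hbdef]; dsimp only; rw [hu0, mul_zero, sub_zero]
        rw [hbc] at hbih
        have hxv : ∃ v : Fin (rowDeg F Gh ih), x ⟨ih, v⟩ ≠ 0 := by
          by_contra hall
          push_neg at hall
          refine hbih ?_
          rw [hcpolydef]
          dsimp only
          refine Finset.sum_eq_zero fun v _ => ?_
          rw [hall v, map_zero, zero_mul]
        obtain ⟨v, hv⟩ := hxv
        have hdeg : L - 1 - (v:ℕ) ≤ (cpoly ih).natDegree :=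
          Polynomial.le_natDegree_of_ne_zero (by rw [hccoeff ih v]; exact hv)
        have h1 := v.isLt
        have h3 := hdL ih
        rw [hbc]
        omega
      · have hXu : (Polynomial.X ^ L * u ih).natDegree = L + (u ih).natDegree := by
          rw [Polynomial.natDegree_mul ((pow_ne_zero L Polynomial.X_ne_zero)) hu0, Polynomial.natDegree_X_pow]
        have hlt : (cpoly ih).natDegree < (Polynomial.X ^ L * u ih).natDegree := by
          have := hcdeg ih
          omega
        have : (b ih).natDegree = L + (u ih).natDegree := by
          rw [hbdef]
          dsimp only
          rw [Polynomial.natDegree_sub_eq_right_of_natDegree_lt hlt, hXu]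
        omega
    have hthL : L ≤ th := by
      rw [hih₀]
      refine hbL ih₀ ?_
      have := Finset.mem_filter.mp hih₀T
      exact this.2
    set lam : Fin kb → F := fun ih =>
      if (b ih).natDegree + rowDeg F Gh ih = th ∧ b ih ≠ 0 then (b ih).leadingCoeff else 0
      with hlamdef
    have hlam0 : lam ih₀ ≠ 0 := by
      have hb₀ : b ih₀ ≠ 0 := (Finset.mem_filter.mp hih₀T).2
      rw [hlamdef]
      dsimp only
      rw [if_pos ⟨hih₀.symm, hb₀⟩]
      exact Polynomial.leadingCoeff_ne_zero.mpr hb₀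
    have hcoeffth : ∀ (ihh : Fin kb) (col : Fin n),
        ((b ihh) * Gh ihh col).coeff th
          = lam ihh * (Gh ihh col).coeff (rowDeg F Gh ihh) := by
      intro ihh col
      rcases Decidable.em (b ihh = 0) with hz|hz
      · rw [hz, zero_mul, Polynomial.coeff_zero, hlamdef]
        dsimp only
        rw [if_neg (fun hcon => hcon.2 hz), zero_mul]
      · have hmemT : ihh ∈ T := Finset.mem_filter.mpr ⟨Finset.mem_univ _, hz⟩
        have hle : (b ihh).natDegree + rowDeg F Gh ihh ≤ th := by
          rw [hth]
          exact Finset.le_sup (f := fun ih => (b ih).natDegree + rowDeg F Gh ih) hmemT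
        rcases Decidable.em ((b ihh).natDegree + rowDeg F Gh ihh = th) with heq|hne
        · rw [← heq, coeff_mul_of_natDegree_le' (le_refl _) (natDegree_le_rowDeg Gh ihh col),
            Polynomial.coeff_natDegree, hlamdef]
          dsimp only
          rw [if_pos ⟨heq, hz⟩]
        · have hdlt : ((b ihh) * Gh ihh col).natDegree < th := by
            have h1 : ((b ihh) * Gh ihh col).natDegree
                ≤ (b ihh).natDegree + (Gh ihh col).natDegree := Polynomial.natDegree_mul_le
            have h2 := natDegree_le_rowDeg Gh ihh col
            omega
          rw [Polynomial.coeff_eq_zero_of_natDegree_lt hdlt, hlamdef]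
          dsimp only
          rw [if_neg (fun hcon => hne hcon.1), zero_mul]
    have hlamM : lam ᵥ* (Matrix.of fun ih c => (Gh ih c).coeff (rowDeg F Gh ih)) = 0 := by
      funext col
      have hsum0 : ∑ ihh, ((b ihh) * Gh ihh col).coeff th = 0 := by
        rw [← Polynomial.finset_sum_coeff]
        exact hbG col th hthL
      simp only [Matrix.vecMul, dotProduct, Matrix.of_apply, Pi.zero_apply]
      rw [← hsum0]
      exact (Finset.sum_congr rfl fun ihh _ => hcoeffth ihh col).symm
    have := leading_rows_indep hGh lam hlamM
    exact hlam0 (congrFun this ih₀)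
  -- conclude x = 0
  funext sh
  obtain ⟨ih, v⟩ := sh
  have hcb : cpoly ih = Polynomial.X ^ L * u ih := by
    have := hb0 ih
    rw [hbdef] at this
    dsimp only at this
    exact sub_eq_zero.mp this
  have hx0 : x ⟨ih, v⟩ = (Polynomial.X ^ L * u ih).coeff (L-1-(v:ℕ)) := by
    rw [← hcb, hccoeff ih v]
  rw [hx0, mul_comm, Polynomial.coeff_mul_X_pow', if_neg (by omega)]
  rfl

end ConvCode
namespace ConvCode

variable {F : Type} [Field F] [Fintype F]

lemma single_vecMul_eq_row {k n : ℕ} (G : Matrix (Fin k) (Fin n) (Polynomial F)) (i : Fin k) :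
    (Pi.single i (1 : Polynomial F)) ᵥ* G = G i := by
  funext c
  simp only [Matrix.vecMul, dotProduct]
  rw [Finset.sum_eq_single i]
  · rw [Pi.single_eq_same, one_mul]
  · intro b _ hb
    rw [Pi.single_eq_of_ne hb, zero_mul]
  · intro hb; exact absurd (Finset.mem_univ i) hb

lemma row_mem_code {k n : ℕ} (G : Matrix (Fin k) (Fin n) (Polynomial F)) (i : Fin k) :
    G i ∈ code F G :=
  ⟨Pi.single i 1, single_vecMul_eq_row G i⟩

lemma horth_of_dual {k kb n : ℕ} {G : Matrix (Fin k) (Fin n) (Polynomial F)}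
    {Gh : Matrix (Fin kb) (Fin n) (Polynomial F)}
    (hdual : code F Gh = dualCode F (code F G)) :
    ∀ (ih : Fin kb) (i : Fin k), ∑ c, Gh ih c * G i c = 0 := by
  intro ih i
  have h1 : Gh ih ∈ dualCode F (code F G) := hdual ▸ row_mem_code Gh ih
  exact h1 (G i) (row_mem_code G i)

lemma mem_code_of_orth {k kb n : ℕ} {G : Matrix (Fin k) (Fin n) (Polynomial F)}
    {Gh : Matrix (Fin kb) (Fin n) (Polynomial F)}
    (hdual : code F Gh = dualCode F (code F G)) :
    ∀ w : Fin n → Polynomial F, (∀ i, ∑ c, w c * G i c = 0) → w ∈ code F Gh := by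
  intro w hw
  rw [hdual]
  intro v hv
  obtain ⟨uu, rfl⟩ := hv
  show ∑ c, w c * (uu ᵥ* G) c = 0
  have hterm : ∀ c, w c * (uu ᵥ* G) c = ∑ i, uu i * (w c * G i c) := by
    intro c
    show w c * ∑ i, uu i * G i c = _
    rw [Finset.mul_sum]
    exact Finset.sum_congr rfl fun i _ => by ring
  rw [Finset.sum_congr rfl fun c _ => hterm c, Finset.sum_comm]
  refine Finset.sum_eq_zero fun i _ => ?_
  rw [← Finset.mul_sum, hw i, mul_zero]

lemma mem_code_G_of_orth {k kb n : ℕ} (hkn : k + kb = n)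
    {G : Matrix (Fin k) (Fin n) (Polynomial F)}
    {Gh : Matrix (Fin kb) (Fin n) (Polynomial F)}
    (hGb : IsBasic F G) (hGhb : IsBasic F Gh)
    (horth : ∀ (ih : Fin kb) (i : Fin k), ∑ c, Gh ih c * G i c = 0) :
    ∀ w : Fin n → Polynomial F, (∀ ih, ∑ c, w c * Gh ih c = 0) → w ∈ code F G := by
  obtain ⟨H, hH⟩ := hGb
  obtain ⟨Hh, hHh⟩ := hGhb
  intro w hw
  have hGH : ∀ i i', ∑ r, G i r * H r i' = (1 : Matrix (Fin k) (Fin k) (Polynomial F)) i i' :=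
    fun i i' => by rw [← hH]; rfl
  have hGhHh : ∀ ih ih', ∑ r, Gh ih r * Hh r ih'
      = (1 : Matrix (Fin kb) (Fin kb) (Polynomial F)) ih ih' :=
    fun ih ih' => by rw [← hHh]; rfl
  set e : Fin k ⊕ Fin kb ≃ Fin n := finSumFinEquiv.trans (finCongr hkn) with he
  set M : Matrix (Fin n) (Fin n) (Polynomial F) :=
    Matrix.of fun r c' => Sum.elim (fun i => H r i) (fun ih => Gh ih r) (e.symm c') with hM
  have hMl : ∀ (r : Fin n) (i : Fin k), M r (e (Sum.inl i)) = H r i := by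
    intro r i
    rw [hM]
    simp
  have hMr : ∀ (r : Fin n) (ih : Fin kb), M r (e (Sum.inr ih)) = Gh ih r := by
    intro r ih
    rw [hM]
    simp
  have hdet : M.det ≠ 0 := by
    intro h0
    obtain ⟨z, hz0, hz⟩ := (Matrix.exists_mulVec_eq_zero_iff).mpr h0
    have hrow : ∀ r : Fin n, (∑ i, H r i * z (e (Sum.inl i)))
        + ∑ ih, Gh ih r * z (e (Sum.inr ih)) = 0 := by
      intro r
      have h1 : ∑ c', M r c' * z c' = 0 := congrFun hz r
      rw [← Equiv.sum_comp e (fun c' => M r c' * z c'), Fintype.sum_sum_type] at h1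
      rw [← h1]
      congr 1
      · exact Finset.sum_congr rfl fun i _ => by rw [hMl r i]
      · exact Finset.sum_congr rfl fun ih _ => by rw [hMr r ih]
    have hzk : ∀ i, z (e (Sum.inl i)) = 0 := by
      intro i
      have hcalc : ∑ r, G i r * ((∑ i', H r i' * z (e (Sum.inl i')))
          + ∑ ih, Gh ih r * z (e (Sum.inr ih))) = 0 :=
        Finset.sum_eq_zero fun r _ => by rw [hrow r, mul_zero]
      have hexp : ∀ r, G i r * ((∑ i', H r i' * z (e (Sum.inl i')))
          + ∑ ih, Gh ih r * z (e (Sum.inr ih)))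
            = (∑ i', (G i r * H r i') * z (e (Sum.inl i')))
              + ∑ ih, (Gh ih r * G i r) * z (e (Sum.inr ih)) := by
        intro r
        rw [mul_add, Finset.mul_sum, Finset.mul_sum]
        congr 1
        · exact Finset.sum_congr rfl fun i' _ => by ring
        · exact Finset.sum_congr rfl fun ih _ => by ring
      rw [Finset.sum_congr rfl fun r _ => hexp r, Finset.sum_add_distrib] at hcalc
      have hA : ∑ r, ∑ i', (G i r * H r i') * z (e (Sum.inl i')) = z (e (Sum.inl i)) := by
        rw [Finset.sum_comm]
        have hst : ∀ i' : Fin k, ∑ r, (G i r * H r i') * z (e (Sum.inl i'))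
            = if i' = i then z (e (Sum.inl i')) else 0 := by
          intro i'
          rw [← Finset.sum_mul, hGH i i', Matrix.one_apply, ite_mul, one_mul, zero_mul]
          exact if_congr eq_comm rfl rfl
        rw [Finset.sum_congr rfl fun i' _ => hst i',
          Finset.sum_ite_eq' Finset.univ i (fun i' => z (e (Sum.inl i'))),
          if_pos (Finset.mem_univ i)]
      have hB : ∑ r, ∑ ih, (Gh ih r * G i r) * z (e (Sum.inr ih)) = 0 := by
        rw [Finset.sum_comm]
        refine Finset.sum_eq_zero fun ih _ => ?_
        rw [← Finset.sum_mul, horth ih i, zero_mul]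
      rw [hA, hB, add_zero] at hcalc
      exact hcalc
    have hzkb : ∀ ih, z (e (Sum.inr ih)) = 0 := by
      have hGhz : ∀ r, ∑ ih, Gh ih r * z (e (Sum.inr ih)) = 0 := by
        intro r
        have := hrow r
        rw [Finset.sum_congr rfl (fun i _ => by rw [hzk i, mul_zero]),
          Finset.sum_const_zero, zero_add] at this
        exact this
      intro ih
      have hcalc : ∑ r, (∑ ih', Gh ih' r * z (e (Sum.inr ih'))) * Hh r ih = 0 :=
        Finset.sum_eq_zero fun r _ => by rw [hGhz r, zero_mul]
      have hexp : ∀ r, (∑ ih', Gh ih' r * z (e (Sum.inr ih'))) * Hh r ih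
          = ∑ ih', (Gh ih' r * Hh r ih) * z (e (Sum.inr ih')) := by
        intro r
        rw [Finset.sum_mul]
        exact Finset.sum_congr rfl fun ih' _ => by ring
      rw [Finset.sum_congr rfl fun r _ => hexp r, Finset.sum_comm] at hcalc
      have hst : ∀ ih' : Fin kb, ∑ r, (Gh ih' r * Hh r ih) * z (e (Sum.inr ih'))
          = if ih' = ih then z (e (Sum.inr ih')) else 0 := by
        intro ih'
        rw [← Finset.sum_mul, hGhHh ih' ih, Matrix.one_apply, ite_mul, one_mul, zero_mul]
      rw [Finset.sum_congr rfl fun ih' _ => hst ih',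
        Finset.sum_ite_eq' Finset.univ ih (fun ih' => z (e (Sum.inr ih'))),
        if_pos (Finset.mem_univ ih)] at hcalc
      exact hcalc
    apply hz0
    funext c'
    have : c' = e (e.symm c') := (Equiv.apply_symm_apply e c').symm
    rw [this]
    rcases e.symm c' with i | ih
    · exact hzk i
    · exact hzkb ih
  set up : Fin k → Polynomial F := fun i => ∑ c, w c * H c i with hup
  set rv : Fin n → Polynomial F := fun c => w c - ∑ i, up i * G i c with hrv
  have hr1 : ∀ i', ∑ c, rv c * H c i' = 0 := by
    intro i'
    have hexp : ∀ c, rv c * H c i' = w c * H c i' - ∑ i, (up i * (G i c * H c i')) := by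
      intro c
      rw [hrv]
      dsimp only
      rw [sub_mul, Finset.sum_mul]
      congr 1
      exact Finset.sum_congr rfl fun i _ => by ring
    rw [Finset.sum_congr rfl fun c _ => hexp c, Finset.sum_sub_distrib]
    have hA : ∑ c, ∑ i, up i * (G i c * H c i') = up i' := by
      rw [Finset.sum_comm]
      have hst : ∀ i : Fin k, ∑ c, up i * (G i c * H c i')
          = if i = i' then up i else 0 := by
        intro i
        rw [← Finset.mul_sum, hGH i i', Matrix.one_apply, mul_ite, mul_one, mul_zero]
      rw [Finset.sum_congr rfl fun i _ => hst i,
        Finset.sum_ite_eq' Finset.univ i' (fun i => up i), if_pos (Finset.mem_univ i')]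
    rw [hA, hup]
    exact sub_self _
  have hr2 : ∀ ihh, ∑ c, rv c * Gh ihh c = 0 := by
    intro ihh
    have hexp : ∀ c, rv c * Gh ihh c
        = w c * Gh ihh c - ∑ i, up i * (Gh ihh c * G i c) := by
      intro c
      rw [hrv]
      dsimp only
      rw [sub_mul, Finset.sum_mul]
      refine congrArg (w c * Gh ihh c - ·) ?_
      exact Finset.sum_congr rfl fun i _ => by ring
    rw [Finset.sum_congr rfl fun c _ => hexp c, Finset.sum_sub_distrib, hw ihh]
    have hB : ∑ c, ∑ i, up i * (Gh ihh c * G i c) = 0 := by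
      rw [Finset.sum_comm]
      refine Finset.sum_eq_zero fun i _ => ?_
      rw [← Finset.mul_sum, horth ihh i, mul_zero]
    rw [hB, sub_self]
  have hrM : rv ᵥ* M = 0 := by
    funext c'
    show ∑ row, rv row * M row c' = 0
    have : c' = e (e.symm c') := (Equiv.apply_symm_apply e c').symm
    rw [this]
    rcases e.symm c' with i | ih
    · rw [Finset.sum_congr rfl fun row _ => by rw [hMl row i]]
      exact hr1 i
    · rw [Finset.sum_congr rfl fun row _ => by rw [hMr row ih]]
      exact hr2 ih
  have hrz : rv = 0 := by
    by_contra hr0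
    have hMt : Mᵀ *ᵥ rv = 0 := by rw [Matrix.mulVec_transpose, hrM]
    have : Mᵀ.det = 0 := (Matrix.exists_mulVec_eq_zero_iff).mp ⟨rv, hr0, hMt⟩
    rw [Matrix.det_transpose] at this
    exact hdet this
  refine ⟨up, ?_⟩
  funext c
  have hc := congrFun hrz c
  rw [hrv] at hc
  dsimp only at hc
  rw [Pi.zero_apply, sub_eq_zero] at hc
  show ∑ i, up i * G i c = w c
  exact hc.symm

end ConvCode
open ConvCode in
/-- Theorem 4.8: the matrix `P = Ĉ S₀ᵀ − N A` is in `GL_δ(F)`. -/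
theorem statement16 {F : Type} [Field F] [Fintype F]
    (k kb n : ℕ) (hkn : k + kb = n)
    (G : Matrix (Fin k) (Fin n) (Polynomial F)) (hG : ConvCode.IsMinimalEncoder F G)
    (Gh : Matrix (Fin kb) (Fin n) (Polynomial F)) (hGh : ConvCode.IsMinimalEncoder F Gh)
    (hdual : ConvCode.code F Gh = ConvCode.dualCode F (ConvCode.code F G))
    (P : Matrix (ConvCode.States F Gh) (ConvCode.States F G) F)
    (hP : P = ConvCode.matC F Gh * (ConvCode.Sm F G 0)ᵀ -
      ConvCode.Nm F G Gh * ConvCode.matA F G) :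
    ∃ Pinv : Matrix (ConvCode.States F G) (ConvCode.States F Gh) F,
      P * Pinv = 1 ∧ Pinv * P = 1 := by
  classical
  have horth : ∀ (ih : Fin kb) (i : Fin k), ∑ c, Gh ih c * G i c = 0 :=
    horth_of_dual hdual
  have hPK : P = Kmat G Gh := by rw [hP]; exact P_eq_K horth
  have hinjL : ∀ x : States F Gh → F, x ᵥ* P = 0 → x = 0 := by
    intro x hx
    exact main_inj G Gh hGh horth (mem_code_of_orth hdual) x (by rwa [hPK] at hx)
  have horthT : ∀ (i : Fin k) (ih : Fin kb), ∑ c, G i c * Gh ih c = 0 := by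
    intro i ih
    rw [Finset.sum_congr rfl fun c _ => mul_comm (G i c) (Gh ih c)]
    exact horth ih i
  have hmemG := mem_code_G_of_orth hkn hG.1 hGh.1 horth
  have hinjR : ∀ y : States F G → F, P *ᵥ y = 0 → y = 0 := by
    intro y hy
    refine main_inj Gh G hG horthT hmemG y ?_
    funext sh
    have h3 : ∑ s, P sh s * y s = 0 := congrFun hy sh
    have hterm : ∀ s, y s * Kmat Gh G s sh = -(P sh s * y s) := by
      intro s
      have h2 : P sh s = - Kmat Gh G s sh := by rw [hP]; exact P_eq_negKt horth sh s
      rw [h2]; ring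
    show ∑ s, y s * Kmat Gh G s sh = 0
    rw [Finset.sum_congr rfl fun s _ => hterm s, Finset.sum_neg_distrib, h3, neg_zero]
  -- dimensions agree
  have hcard : Fintype.card (States F Gh) = Fintype.card (States F G) := by
    have h1 : Function.Injective (Matrix.vecMulLinear P) := by
      rw [← LinearMap.ker_eq_bot, LinearMap.ker_eq_bot']
      intro m hm
      exact hinjL m (by rwa [Matrix.vecMulLinear_apply] at hm)
    have h2 : Function.Injective (Matrix.mulVecLin P) := by
      rw [← LinearMap.ker_eq_bot, LinearMap.ker_eq_bot']
      intro m hm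
      exact hinjR m (by rwa [Matrix.mulVecLin_apply] at hm)
    have hle1 := LinearMap.finrank_le_finrank_of_injective h1
    have hle2 := LinearMap.finrank_le_finrank_of_injective h2
    rw [Module.finrank_pi, Module.finrank_pi] at hle1 hle2
    omega
  set e : States F Gh ≃ States F G := Fintype.equivOfCardEq hcard with he
  set Q : Matrix (States F Gh) (States F Gh) F := P.submatrix id ⇑e with hQ
  have hQdet : IsUnit Q.det := by
    rw [isUnit_iff_ne_zero]
    intro h0
    obtain ⟨v, hv0, hv⟩ := (Matrix.exists_vecMul_eq_zero_iff).mpr h0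
    refine hv0 (hinjL v ?_)
    funext s
    have h1 : (v ᵥ* Q) (e.symm s) = 0 := by rw [hv]; rfl
    have h2 : (v ᵥ* Q) (e.symm s) = (v ᵥ* P) s := by
      show ∑ i, v i * Q i (e.symm s) = ∑ i, v i * P i s
      refine Finset.sum_congr rfl fun i _ => ?_
      rw [hQ, Matrix.submatrix_apply, id_eq, Equiv.apply_symm_apply]
    rw [h2] at h1
    rw [h1]
    rfl
  have hPQ : P = Q.submatrix id ⇑e.symm := by
    ext i s
    rw [hQ, Matrix.submatrix_apply, Matrix.submatrix_apply, id_eq, id_eq,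
      Equiv.apply_symm_apply]
  have hQP : ∀ (j : States F Gh) (t : States F G), Q j (e.symm t) = P j t := by
    intro j t
    rw [hQ, Matrix.submatrix_apply, id_eq, Equiv.apply_symm_apply]
  refine ⟨(Q⁻¹).submatrix ⇑e.symm id, ?_, ?_⟩
  · ext a b
    rw [Matrix.mul_apply]
    calc ∑ s, P a s * ((Q⁻¹).submatrix ⇑e.symm id) s b
        = ∑ s, Q a (e.symm s) * Q⁻¹ (e.symm s) b := by
          refine Finset.sum_congr rfl fun s _ => ?_
          rw [hQP a s, Matrix.submatrix_apply, id_eq]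
      _ = ∑ j, Q a j * Q⁻¹ j b := Equiv.sum_comp e.symm (fun j => Q a j * Q⁻¹ j b)
      _ = (Q * Q⁻¹) a b := (Matrix.mul_apply).symm
      _ = (1 : Matrix (States F Gh) (States F Gh) F) a b := by
          rw [Matrix.mul_nonsing_inv Q hQdet]
      _ = (1 : Matrix (States F Gh) (States F Gh) F) a b := rfl
  · ext s t
    rw [Matrix.mul_apply]
    have hcalc : ∑ j, ((Q⁻¹).submatrix ⇑e.symm id) s j * P j t
        = (Q⁻¹ * Q) (e.symm s) (e.symm t) := by
      rw [Matrix.mul_apply]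
      refine Finset.sum_congr rfl fun j _ => ?_
      rw [hQP j t, Matrix.submatrix_apply, id_eq]
    rw [hcalc, Matrix.nonsing_inv_mul Q hQdet, Matrix.one_apply, Matrix.one_apply]
    exact if_congr (EmbeddingLike.apply_eq_iff_eq e.symm) rfl rfl
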